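/- arXiv:math/0609283 — 2 statements merged into one kernel-verified Lean document; each statement's English description precedes it below -/
import Mathlib

section
/- For α ≥ 1 and n ≥ 0, with q = (1-√5)/(1+√5), one has (1-q^α) q^{αn} (q;q)_n^2 / ((q^α;q)_n^2 (1-q^{α+2n})) = (-1)^{αn} · (F_α / F_{α+2n}) · binom(α+n-1, n)_F^{-2}. -/
noncomputable def fibQ : ℝ := (1 - Real.sqrt 5) / (1 + Real.sqrt 5)

/-- The q-Pochhammer symbol `(a;q)_n = ∏_{j=0}^{n-1} (1 - a q^j)`. -/
noncomputable def qPoch (a q : ℝ) (n : ℕ) : ℝ := ∏ j ∈ Finset.range n, (1 - a * q ^ j)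

/-- The Fibonomial coefficient `∏_{i=1}^k F_{m-i+1}/F_i`, as a real number. -/
noncomputable def fibinom (m k : ℕ) : ℝ :=
  ∏ j ∈ Finset.range k, (Nat.fib (m - j) : ℝ) / (Nat.fib (j + 1) : ℝ)

open Real goldenRatio Finset

lemma sqrt5_pos : (0:ℝ) < √5 := Real.sqrt_pos.mpr (by norm_num)

lemma fibQ_eq : fibQ = ψ / φ := by
  have h : (1:ℝ) + √5 ≠ 0 := by positivity
  unfold fibQ
  rw [div_div_div_cancel_right₀]
  norm_num

lemma one_sub_fibQ_pow (m : ℕ) : 1 - fibQ ^ m = √5 * (Nat.fib m : ℝ) / φ ^ m := by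
  have hφ : (φ:ℝ) ≠ 0 := ne_of_gt goldenRatio_pos
  have h5 : √5 ≠ 0 := ne_of_gt sqrt5_pos
  rw [fibQ_eq, div_pow, Real.coe_fib_eq]
  field_simp

lemma fibQ_pow (m : ℕ) : fibQ ^ m = (-1 : ℝ) ^ m / φ ^ (2 * m) := by
  have hφ : (φ:ℝ) ≠ 0 := ne_of_gt goldenRatio_pos
  have h : fibQ = -1 / φ ^ 2 := by
    rw [fibQ_eq, div_eq_div_iff hφ (pow_ne_zero 2 hφ), pow_two, ← mul_assoc,
      goldenConj_mul_goldenRatio]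
  rw [h, div_pow, ← pow_mul]

theorem norm_constant_eq (α n : ℕ) (hα : 1 ≤ α) :
    (1 - fibQ ^ α) * fibQ ^ (α * n) * qPoch fibQ fibQ n ^ 2 /
        (qPoch (fibQ ^ α) fibQ n ^ 2 * (1 - fibQ ^ (α + 2 * n))) =
      (-1 : ℝ) ^ (α * n) * ((Nat.fib α : ℝ) / (Nat.fib (α + 2 * n) : ℝ)) *
        (fibinom (α + n - 1) n ^ 2)⁻¹ := by
  have hφ : (φ:ℝ) ≠ 0 := ne_of_gt goldenRatio_pos
  have h5 : √5 ≠ 0 := ne_of_gt sqrt5_pos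
  set s : ℕ := ∑ j ∈ range n, j with hs
  set P : ℝ := ∏ j ∈ range n, (Nat.fib (j + 1) : ℝ) with hP
  set Q : ℝ := ∏ j ∈ range n, (Nat.fib (α + j) : ℝ) with hQ
  have hPpos : 0 < P :=
    Finset.prod_pos fun j _ => by
      exact_mod_cast Nat.cast_pos.mpr (Nat.fib_pos.mpr (Nat.succ_pos j))
  have hQpos : 0 < Q :=
    Finset.prod_pos fun j _ => Nat.cast_pos.mpr (Nat.fib_pos.mpr (by omega))
  have hF2n : (Nat.fib (α + 2 * n) : ℝ) ≠ 0 := by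
    exact_mod_cast (Nat.fib_pos.mpr (by omega)).ne'
  have hq1 : qPoch fibQ fibQ n = √5 ^ n * P / φ ^ (s + n) := by
    unfold qPoch
    have : ∀ j ∈ range n, 1 - fibQ * fibQ ^ j = √5 * (Nat.fib (j + 1) : ℝ) / φ ^ (j + 1) := by
      intro j _
      rw [← pow_succ', one_sub_fibQ_pow]
    rw [Finset.prod_congr rfl this, Finset.prod_div_distrib, Finset.prod_mul_distrib,
      Finset.prod_const, Finset.prod_pow_eq_pow_sum, Finset.sum_add_distrib,
      Finset.sum_const, Finset.card_range, smul_eq_mul, mul_one]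
  have hq2 : qPoch (fibQ ^ α) fibQ n = √5 ^ n * Q / φ ^ (α * n + s) := by
    unfold qPoch
    have : ∀ j ∈ range n,
        1 - fibQ ^ α * fibQ ^ j = √5 * (Nat.fib (α + j) : ℝ) / φ ^ (α + j) := by
      intro j _
      rw [← pow_add, one_sub_fibQ_pow]
    rw [Finset.prod_congr rfl this, Finset.prod_div_distrib, Finset.prod_mul_distrib,
      Finset.prod_const, Finset.prod_pow_eq_pow_sum, Finset.sum_add_distrib,
      Finset.sum_const, Finset.card_range, smul_eq_mul, mul_comm n α]
  have hfib : fibinom (α + n - 1) n = Q / P := by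
    unfold fibinom
    rw [Finset.prod_div_distrib]
    congr 1
    rw [hQ, ← Finset.prod_range_reflect (fun j => (Nat.fib (α + j) : ℝ)) n]
    refine Finset.prod_congr rfl fun j hj => ?_
    have hj' := Finset.mem_range.mp hj
    have : α + n - 1 - j = α + (n - 1 - j) := by omega
    rw [this]
  rw [hq1, hq2, hfib, one_sub_fibQ_pow α, one_sub_fibQ_pow (α + 2 * n), fibQ_pow (α * n)]
  have hPne := hPpos.ne'
  have hQne := hQpos.ne'
  field_simp
  ring
end

section
/- For α ∈ ℕ with α ≥ 1 and n ≥ 0, det((1/F_{α+i+j})_{0≤i,j≤n}) = ((-1)^{α·binom(n+1,2)} · F_α · ∏_{k=1}^n F_{α+2k} · binom(α+2k-1, k)_F^2)^{-1}; in particular this determinant is the reciprocal of a nonzero integer. -/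
open Real goldenRatio Finset

/-- Vajda's identity over ℝ. -/
lemma vajda (a i j : ℕ) :
    (Nat.fib (a + i) : ℝ) * Nat.fib (a + j) - Nat.fib a * Nat.fib (a + i + j) =
      (-1) ^ a * Nat.fib i * Nat.fib j := by
  have hgc : φ * ψ = -1 := goldenRatio_mul_goldenConj
  simp only [Real.coe_fib_eq]
  set g : ℝ := φ with hg
  set c : ℝ := ψ with hc
  set s : ℝ := √5 with hs
  have h5 : s ≠ 0 := by rw [hs]; positivity
  have h55 : s * s = 5 := Real.mul_self_sqrt (by norm_num)
  have key : (g ^ (a + i) - c ^ (a + i)) * (g ^ (a + j) - c ^ (a + j)) -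
      (g ^ a - c ^ a) * (g ^ (a + i + j) - c ^ (a + i + j)) =
      (g * c) ^ a * ((g ^ i - c ^ i) * (g ^ j - c ^ j)) := by
    simp only [pow_add, mul_pow]
    ring
  rw [div_mul_div_comm, div_mul_div_comm, h55, div_sub_div_same, key, hgc,
    mul_div_assoc, mul_assoc, div_mul_div_comm, h55]

lemma fib_real_pos {n : ℕ} (h : 1 ≤ n) : 0 < (Nat.fib n : ℝ) := by
  exact_mod_cast Nat.fib_pos.2 h

lemma fibinom_zero (m : ℕ) : fibinom m 0 = 1 := by simp [fibinom]

lemma fibinom_succ (m k : ℕ) :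
    fibinom m (k + 1) = fibinom m k * ((Nat.fib (m - k) : ℝ) / (Nat.fib (k + 1) : ℝ)) :=
  Finset.prod_range_succ _ _

lemma fibinom_eq_zero {m k : ℕ} (h : m < k) : fibinom m k = 0 := by
  apply Finset.prod_eq_zero (Finset.mem_range.2 h)
  simp

lemma fibinom_pos {m k : ℕ} (h : k ≤ m) : 0 < fibinom m k := by
  apply Finset.prod_pos
  intro j hj
  rw [Finset.mem_range] at hj
  apply div_pos (fib_real_pos ?_) (fib_real_pos (by omega))
  omega

lemma fibinom_top (m k : ℕ) :
    fibinom (m + 1) (k + 1) = (Nat.fib (m + 1) : ℝ) / (Nat.fib (k + 1) : ℝ) * fibinom m k := by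
  unfold fibinom
  rw [Finset.prod_div_distrib, Finset.prod_div_distrib, Finset.prod_range_succ',
    Finset.prod_range_succ]
  have h0 : ∀ j, m + 1 - (j + 1) = m - j := fun j => by omega
  simp only [h0, Nat.sub_zero, Nat.fib_one, Nat.cast_one]
  field_simp

def fibnom : ℕ → ℕ → ℕ
  | _, 0 => 1
  | 0, _+1 => 0
  | m+1, k+1 => Nat.fib (m + 1 - k) * fibnom m k + Nat.fib k * fibnom m (k+1)

lemma fibnom_cast : ∀ m k, (fibnom m k : ℝ) = fibinom m k := by
  intro m
  induction m with
  | zero =>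
    intro k
    cases k with
    | zero => simp [fibnom, fibinom_zero]
    | succ k => simp [fibnom, fibinom_eq_zero (Nat.succ_pos k)]
  | succ m ih =>
    intro k
    cases k with
    | zero => simp [fibnom, fibinom_zero]
    | succ k =>
      rw [fibnom]
      push_cast
      rw [ih, ih, fibinom_top]
      rcases le_or_gt k m with hkm | hkm
      · -- main case
        rw [fibinom_succ]
        have h1 : (Nat.fib (m + 1) : ℝ) = Nat.fib (m + 1 - k) * Nat.fib (k + 1)
            + Nat.fib k * Nat.fib (m - k) := by
          have := Nat.fib_add (m - k) k
          have e : m - k + k + 1 = m + 1 := by omega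
          rw [e] at this
          have e2 : m + 1 - k = m - k + 1 := by omega
          rw [this, e2]
          push_cast
          ring
        have hk1 : (Nat.fib (k + 1) : ℝ) ≠ 0 := (fib_real_pos (by omega)).ne'
        field_simp [h1]
        linear_combination (-fibinom m k) * h1
      · -- degenerate case : everything is zero
        rw [fibinom_eq_zero hkm, fibinom_eq_zero (by omega : m < k + 1)]
        simp

noncomputable def filbertE (α n : ℕ) : ℝ :=
  (-1) ^ (α * Nat.choose (n + 1) 2) * (Nat.fib α : ℝ) *
    ∏ k ∈ Finset.Icc 1 n, (Nat.fib (α + 2 * k) : ℝ) * fibinom (α + 2 * k - 1) k ^ 2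

lemma prod_Icc_one (f : ℕ → ℝ) (n : ℕ) :
    ∏ k ∈ Icc 1 n, f k = ∏ j ∈ range n, f (j + 1) := by
  induction n with
  | zero => simp
  | succ n ih => rw [Finset.prod_Icc_succ_top (by omega), ih, Finset.prod_range_succ]

lemma E_step (α n : ℕ) (hα : 1 ≤ α) :
    filbertE α (n + 1) * ((-1 : ℝ) ^ (α * (n + 1)) *
        (∏ i ∈ range (n + 1), (Nat.fib (i + 1) : ℝ) / (Nat.fib (α + i + 1) : ℝ)) ^ 2) =
      (Nat.fib α : ℝ) * filbertE (α + 2) n := by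
  unfold filbertE
  rw [prod_Icc_one, prod_Icc_one]
  -- rewrite each term of the big product on the left
  have hterm : ∀ j ∈ range (n + 1),
      (Nat.fib (α + 2 * (j + 1)) : ℝ) * fibinom (α + 2 * (j + 1) - 1) (j + 1) ^ 2 =
        ((Nat.fib (α + j + 1) : ℝ) / (Nat.fib (j + 1) : ℝ)) ^ 2 *
          ((Nat.fib (α + 2 * j + 2) : ℝ) * fibinom (α + 2 * j + 1) j ^ 2) := by
    intro j _
    have e1 : α + 2 * (j + 1) - 1 = α + 2 * j + 1 := by omega
    have e2 : α + 2 * (j + 1) = α + 2 * j + 2 := by omega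
    have e3 : α + 2 * j + 1 - j = α + j + 1 := by omega
    rw [e1, e2, fibinom_succ, e3]
    ring
  rw [Finset.prod_congr rfl hterm, Finset.prod_mul_distrib]
  -- peel off the first factor of the second product
  have hpeel : ∏ j ∈ range (n + 1), ((Nat.fib (α + 2 * j + 2) : ℝ) * fibinom (α + 2 * j + 1) j ^ 2) =
      (Nat.fib (α + 2) : ℝ) * ∏ j ∈ range n,
        ((Nat.fib (α + 2 + 2 * (j + 1)) : ℝ) * fibinom (α + 2 + 2 * (j + 1) - 1) (j + 1) ^ 2) := by
    rw [Finset.prod_range_succ']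
    simp only [Nat.mul_zero, Nat.add_zero, fibinom_zero, one_pow, mul_one]
    rw [mul_comm]
    congr 1
    refine Finset.prod_congr rfl fun j _ => ?_
    have e1 : α + 2 * (j + 1) + 2 = α + 2 + 2 * (j + 1) := by omega
    have e2 : α + 2 * (j + 1) + 1 = α + 2 + 2 * (j + 1) - 1 := by omega
    rw [e1, e2]
  rw [hpeel]
  -- signs
  have hsign : (-1 : ℝ) ^ (α * Nat.choose (n + 1 + 1) 2) * (-1 : ℝ) ^ (α * (n + 1)) =
      (-1 : ℝ) ^ ((α + 2) * Nat.choose (n + 1) 2) := by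
    have hc : Nat.choose (n + 2) 2 = Nat.choose (n + 1) 2 + (n + 1) := by
      rw [Nat.choose_succ_succ (n + 1) 1, Nat.choose_one_right]; exact Nat.add_comm _ _
    rw [← pow_add, show n + 1 + 1 = n + 2 from rfl, hc]
    have ha : α * (Nat.choose (n + 1) 2 + (n + 1)) + α * (n + 1) =
        α * Nat.choose (n + 1) 2 + 2 * (α * (n + 1)) := by ring
    have hb : (α + 2) * Nat.choose (n + 1) 2 =
        α * Nat.choose (n + 1) 2 + 2 * Nat.choose (n + 1) 2 := by ring
    rw [ha, hb]
    simp [pow_add, pow_mul, neg_one_sq]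
  -- now pure algebra: the ratio product squared cancels
  have hcancel : (∏ i ∈ range (n + 1), (Nat.fib (i + 1) : ℝ) / (Nat.fib (α + i + 1) : ℝ)) *
      (∏ i ∈ range (n + 1), (Nat.fib (α + i + 1) : ℝ) / (Nat.fib (i + 1) : ℝ)) = 1 := by
    rw [← Finset.prod_mul_distrib]
    apply Finset.prod_eq_one
    intro i _
    rw [div_mul_div_comm, div_eq_one_iff_eq]
    · ring
    · exact (mul_pos (fib_real_pos (by omega)) (fib_real_pos (by omega))).ne'
  calc (-1 : ℝ) ^ (α * Nat.choose (n + 1 + 1) 2) * (Nat.fib α : ℝ) *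
        ((∏ j ∈ range (n + 1), ((Nat.fib (α + j + 1) : ℝ) / (Nat.fib (j + 1) : ℝ)) ^ 2) *
          ((Nat.fib (α + 2) : ℝ) * ∏ j ∈ range n,
            ((Nat.fib (α + 2 + 2 * (j + 1)) : ℝ) * fibinom (α + 2 + 2 * (j + 1) - 1) (j + 1) ^ 2))) *
        ((-1 : ℝ) ^ (α * (n + 1)) *
          (∏ i ∈ range (n + 1), (Nat.fib (i + 1) : ℝ) / (Nat.fib (α + i + 1) : ℝ)) ^ 2)
      = ((-1 : ℝ) ^ (α * Nat.choose (n + 1 + 1) 2) * (-1 : ℝ) ^ (α * (n + 1))) * (Nat.fib α : ℝ) *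
        ((∏ i ∈ range (n + 1), (Nat.fib (i + 1) : ℝ) / (Nat.fib (α + i + 1) : ℝ)) *
          (∏ i ∈ range (n + 1), (Nat.fib (α + i + 1) : ℝ) / (Nat.fib (i + 1) : ℝ))) ^ 2 *
        ((Nat.fib (α + 2) : ℝ) * ∏ j ∈ range n,
          ((Nat.fib (α + 2 + 2 * (j + 1)) : ℝ) * fibinom (α + 2 + 2 * (j + 1) - 1) (j + 1) ^ 2)) := by
        simp only [mul_pow, ← Finset.prod_pow]; ring
    _ = (Nat.fib α : ℝ) * ((-1 : ℝ) ^ ((α + 2) * Nat.choose (n + 1) 2) * (Nat.fib (α + 2) : ℝ) *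
          ∏ j ∈ range n,
            ((Nat.fib (α + 2 + 2 * (j + 1)) : ℝ) * fibinom (α + 2 + 2 * (j + 1) - 1) (j + 1) ^ 2)) := by
        rw [hsign, hcancel, one_pow]; ring

lemma filbertE_ne (α n : ℕ) (hα : 1 ≤ α) : filbertE α n ≠ 0 := by
  unfold filbertE
  apply mul_ne_zero (mul_ne_zero (pow_ne_zero _ (by norm_num)) (fib_real_pos hα).ne')
  apply Finset.prod_ne_zero_iff.2
  intro k hk
  rw [Finset.mem_Icc] at hk
  exact mul_ne_zero (fib_real_pos (by omega)).ne'
    (pow_ne_zero _ (fibinom_pos (by omega : k ≤ α + 2 * k - 1)).ne')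

lemma filbert_main : ∀ n : ℕ, ∀ α : ℕ, 1 ≤ α →
    (Matrix.of fun i j : Fin (n + 1) =>
        (1 : ℝ) / (Nat.fib (α + (i : ℕ) + (j : ℕ)) : ℝ)).det = (filbertE α n)⁻¹ := by
  intro n
  induction n with
  | zero =>
    intro α hα
    rw [Matrix.det_fin_one]
    simp [filbertE, Nat.choose_eq_zero_of_lt (by norm_num : 1 < 2), one_div]
  | succ n ih =>
    intro α hα
    set F : ℕ → ℝ := fun m => (Nat.fib m : ℝ) with hF
    have hFpos : ∀ m, 1 ≤ m → 0 < F m := fun m hm => fib_real_pos hm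
    set B : Matrix (Fin (n + 2)) (Fin (n + 2)) ℝ := Matrix.of fun i j =>
      if i = 0 then 1 / F (α + (j : ℕ))
      else (-1) ^ α * F i * F j / (F (α + i) * F (α + j) * F (α + (i : ℕ) + (j : ℕ))) with hB
    set c : Fin (n + 2) → ℝ := fun i => if i = 0 then 0 else F α / F (α + i) with hc
    have hdet : (Matrix.of fun i j : Fin (n + 2) =>
        (1 : ℝ) / (Nat.fib (α + (i : ℕ) + (j : ℕ)) : ℝ)).det = B.det := by
      apply Matrix.det_eq_of_forall_row_eq_smul_add_const c 0 (by simp [hc])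
      intro i j
      rcases eq_or_ne i 0 with hi | hi
      · subst hi
        simp [hB, hc, Matrix.of_apply]
        rfl
      · simp only [hB, hc, Matrix.of_apply, if_neg hi, if_pos rfl, Fin.val_zero, add_zero]
        have h1 : F (α + i) ≠ 0 := (hFpos _ (by omega)).ne'
        have h2 : F (α + j) ≠ 0 := (hFpos _ (by omega)).ne'
        have h3 : F (α + (i : ℕ) + (j : ℕ)) ≠ 0 := (hFpos _ (by omega)).ne'
        have hv := vajda α i j
        have hv' : F (α + i) * F (α + j) - F α * F (α + (i : ℕ) + (j : ℕ)) = (-1) ^ α * F i * F j := hv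
        simp only [if_true]
        show (1 : ℝ) / F (α + (i : ℕ) + (j : ℕ)) = _
        field_simp
        linear_combination hv'
    rw [hdet, Matrix.det_succ_column_zero]
    rw [Fintype.sum_eq_single (0 : Fin (n + 2)) (fun i hi => by
      simp [hB, Matrix.of_apply, if_neg hi, Fin.val_zero, Nat.fib_zero, hF])]
    have hB00 : B 0 0 = 1 / F α := by simp [hB, Matrix.of_apply]
    set v : Fin (n + 1) → ℝ := fun i => (-1) ^ α * F ((i : ℕ) + 1) / F (α + (i : ℕ) + 1) with hv
    set w : Fin (n + 1) → ℝ := fun j => F ((j : ℕ) + 1) / F (α + (j : ℕ) + 1) with hw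
    set P : Matrix (Fin (n + 1)) (Fin (n + 1)) ℝ := Matrix.of fun i j =>
      (1 : ℝ) / (Nat.fib (α + 2 + (i : ℕ) + (j : ℕ)) : ℝ) with hP
    have hsub : B.submatrix (Fin.succAbove 0) Fin.succ =
        Matrix.of fun i j => v i * ((Matrix.of fun i j => w j * P i j) i j) := by
      ext i j
      have hi0 : (i.succ : Fin (n + 2)) ≠ 0 := Fin.succ_ne_zero i
      simp only [Matrix.submatrix_apply, Fin.succAbove_zero, hB, Matrix.of_apply, if_neg hi0,
        Fin.val_succ, hv, hw, hP]
      have e1 : α + ((i : ℕ) + 1) + ((j : ℕ) + 1) = α + 2 + (i : ℕ) + (j : ℕ) := by omega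
      have e2 : α + ((i : ℕ) + 1) = α + (i : ℕ) + 1 := by omega
      have e3 : α + ((j : ℕ) + 1) = α + (j : ℕ) + 1 := by omega
      rw [e1, e2, e3]
      have h1 : F (α + (i : ℕ) + 1) ≠ 0 := (hFpos _ (by omega)).ne'
      have h2 : F (α + (j : ℕ) + 1) ≠ 0 := (hFpos _ (by omega)).ne'
      have h3 : F (α + 2 + (i : ℕ) + (j : ℕ)) ≠ 0 := (hFpos _ (by omega)).ne'
      field_simp
      rfl
    rw [hsub, Matrix.det_mul_column v, Matrix.det_mul_row w, ih (α + 2) (by omega), hB00]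
    -- now pure algebra
    set R : ℝ := ∏ i ∈ range (n + 1), F (i + 1) / F (α + i + 1) with hR
    have hvprod : ∏ i : Fin (n + 1), v i = (-1) ^ (α * (n + 1)) * R := by
      have hv' : ∀ i : Fin (n + 1), v i = (-1 : ℝ) ^ α * (F ((i : ℕ) + 1) / F (α + (i : ℕ) + 1)) :=
        fun i => mul_div_assoc _ _ _
      rw [Finset.prod_congr rfl (fun i _ => hv' i), Finset.prod_mul_distrib,
        Finset.prod_const, Finset.card_univ, Fintype.card_fin, pow_mul, hR,
        ← Fin.prod_univ_eq_prod_range]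
    have hwprod : ∏ j : Fin (n + 1), w j = R := by
      rw [hR, ← Fin.prod_univ_eq_prod_range]
    rw [hvprod, hwprod]
    -- final algebra
    have hR0 : R ≠ 0 := by
      rw [hR]
      apply Finset.prod_ne_zero_iff.2
      intro i _
      exact div_ne_zero (hFpos _ (by omega)).ne' (hFpos _ (by omega)).ne'
    have hE2 : filbertE (α + 2) n ≠ 0 := filbertE_ne _ _ (by omega)
    have hFα : F α ≠ 0 := (hFpos _ hα).ne'
    have key := E_step α n hα
    have hs : (-1 : ℝ) ^ (α * (n + 1)) * (-1 : ℝ) ^ (α * (n + 1)) = 1 := by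
      rw [← pow_add]
      exact Even.neg_one_pow ⟨α * (n + 1), rfl⟩
    have hX : (-1 : ℝ) ^ (α * (n + 1)) * R ^ 2 ≠ 0 := by
      apply mul_ne_zero (pow_ne_zero _ (by norm_num)) (pow_ne_zero _ hR0)
    have hE1 : filbertE α (n + 1) = F α * filbertE (α + 2) n /
        ((-1 : ℝ) ^ (α * (n + 1)) * R ^ 2) := by
      rw [eq_div_iff hX]; exact key
    rw [hE1, inv_div, Fin.val_zero, pow_zero, one_mul]
    field_simp

theorem filbert_det (α : ℕ) (hα : 1 ≤ α) (n : ℕ) :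
    (Matrix.of fun i j : Fin (n + 1) =>
        (1 : ℝ) / (Nat.fib (α + (i : ℕ) + (j : ℕ)) : ℝ)).det =
      ((-1 : ℝ) ^ (α * Nat.choose (n + 1) 2) * (Nat.fib α : ℝ) *
          ∏ k ∈ Finset.Icc 1 n, (Nat.fib (α + 2 * k) : ℝ) * fibinom (α + 2 * k - 1) k ^ 2)⁻¹ ∧
      ∃ z : ℤ, z ≠ 0 ∧
        (Matrix.of fun i j : Fin (n + 1) =>
            (1 : ℝ) / (Nat.fib (α + (i : ℕ) + (j : ℕ)) : ℝ)).det = ((z : ℝ))⁻¹ := by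
  have hmain := filbert_main n α hα
  constructor
  · rw [hmain]; rfl
  · refine ⟨(-1) ^ (α * Nat.choose (n + 1) 2) *
      ((Nat.fib α * ∏ k ∈ Finset.Icc 1 n,
        Nat.fib (α + 2 * k) * fibnom (α + 2 * k - 1) k ^ 2 : ℕ) : ℤ), ?_, ?_⟩
    · apply mul_ne_zero (pow_ne_zero _ (by norm_num))
      rw [Int.natCast_ne_zero]
      apply Nat.mul_ne_zero ((Nat.fib_pos.2 (by omega)).ne')
      rw [Finset.prod_ne_zero_iff]
      intro k hk
      rw [Finset.mem_Icc] at hk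
      apply Nat.mul_ne_zero ((Nat.fib_pos.2 (by omega)).ne')
      apply pow_ne_zero
      have : (0 : ℝ) < (fibnom (α + 2 * k - 1) k : ℝ) := by
        rw [fibnom_cast]
        exact fibinom_pos (by omega)
      exact_mod_cast this.ne'
    · rw [hmain]
      congr 1
      unfold filbertE
      push_cast [fibnom_cast]
      ring
end
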